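/- Let l ∈ ℝ. Consider the quadratic vector field Z(x,y) = (−y + l x², x(1−y)) and the function H(x,y) = (1−y)^{2l} · (−(2l+1) l x² + 2 l y + 1), defined with real powers on the open half-plane {y < 1}. Then H is a first integral of Z on {y < 1}: for every p with p₂ < 1, H is differentiable at p and ∂H/∂x(p)·Z₁(p) + ∂H/∂y(p)·Z₂(p) = 0. Moreover, H(0,y) = (1−y)^{2l}(2ly + 1) for all y < 1. -/

import Mathlib

/-- The quadratic vector field `Z(x,y) = (−y + l x², x(1−y))`. -/
def Zq (l : ℝ) (p : ℝ × ℝ) : ℝ × ℝ :=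
  (-p.2 + l * p.1 ^ 2, p.1 * (1 - p.2))

/-- The function `H(x,y) = (1−y)^{2l} (−(2l+1) l x² + 2ly + 1)`, with real powers. -/
noncomputable def Hd (l : ℝ) (p : ℝ × ℝ) : ℝ :=
  (1 - p.2) ^ (2 * l) * (-(2 * l + 1) * l * p.1 ^ 2 + 2 * l * p.2 + 1)

/-- `H(x,y) = (1−y)^{2l} (−(2l+1) l x² + 2ly + 1)` is a first integral of
`Z(x,y) = (−y + l x², x(1−y))` on the half-plane `{y < 1}`, and
`H(0,y) = (1−y)^{2l} (2ly + 1)` there. -/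
theorem darboux_first_integral_V3 (l : ℝ) :
    (∀ p : ℝ × ℝ, p.2 < 1 →
      DifferentiableAt ℝ (Hd l) p ∧ fderiv ℝ (Hd l) p (Zq l p) = 0) ∧
    (∀ y : ℝ, y < 1 → Hd l (0, y) = (1 - y) ^ (2 * l) * (2 * l * y + 1)) := by
  constructor
  · intro p hp
    obtain ⟨x, y⟩ := p
    simp only at hp
    have hu : (0:ℝ) < 1 - y := by linarith
    set u : ℝ := 1 - y with hu_def
    have hg : HasFDerivAt (fun p : ℝ × ℝ => 1 - p.2)
        ((0 : ℝ × ℝ →L[ℝ] ℝ) - ContinuousLinearMap.snd ℝ ℝ ℝ) (x, y) :=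
      (hasFDerivAt_const 1 (x, y)).sub (hasFDerivAt_snd)
    have hr : HasDerivAt (fun t : ℝ => t ^ (2 * l)) (2 * l * u ^ (2 * l - 1)) u :=
      Real.hasDerivAt_rpow_const (Or.inl hu.ne')
    have hφ : HasFDerivAt (fun p : ℝ × ℝ => (1 - p.2) ^ (2 * l))
        ((2 * l * u ^ (2 * l - 1)) • ((0 : ℝ × ℝ →L[ℝ] ℝ) - ContinuousLinearMap.snd ℝ ℝ ℝ))
        (x, y) := hr.comp_hasFDerivAt (f := fun p : ℝ × ℝ => 1 - p.2) (x, y) hg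
    have hx2 : HasFDerivAt (fun p : ℝ × ℝ => p.1 ^ 2)
        ((2 * x) • ContinuousLinearMap.fst ℝ ℝ ℝ) (x, y) := by
      have := (hasFDerivAt_fst (p := ((x, y) : ℝ × ℝ)) (𝕜 := ℝ)).mul
        (hasFDerivAt_fst (p := ((x, y) : ℝ × ℝ)) (𝕜 := ℝ))
      simpa [pow_two, two_mul, add_smul, Pi.mul_def] using this
    have hQ : HasFDerivAt (fun p : ℝ × ℝ => -(2 * l + 1) * l * p.1 ^ 2 + 2 * l * p.2 + 1)
        ((-(2 * l + 1) * l) • ((2 * x) • ContinuousLinearMap.fst ℝ ℝ ℝ)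
          + (2 * l) • ContinuousLinearMap.snd ℝ ℝ ℝ
          + (0 : ℝ × ℝ →L[ℝ] ℝ)) (x, y) :=
      ((hx2.const_mul (-(2 * l + 1) * l)).add
        (hasFDerivAt_snd.const_mul (2 * l))).add (hasFDerivAt_const 1 (x, y))
    have hH : HasFDerivAt (Hd l)
        ((u ^ (2 * l)) •
            ((-(2 * l + 1) * l) • ((2 * x) • ContinuousLinearMap.fst ℝ ℝ ℝ)
              + (2 * l) • ContinuousLinearMap.snd ℝ ℝ ℝ
              + (0 : ℝ × ℝ →L[ℝ] ℝ))
          + (-(2 * l + 1) * l * x ^ 2 + 2 * l * y + 1) •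
            ((2 * l * u ^ (2 * l - 1)) •
              ((0 : ℝ × ℝ →L[ℝ] ℝ) - ContinuousLinearMap.snd ℝ ℝ ℝ))) (x, y) := hφ.mul hQ
    refine ⟨hH.differentiableAt, ?_⟩
    rw [hH.fderiv]
    have hw : u ^ (2 * l - 1) * u = u ^ (2 * l) := by
      rw [← Real.rpow_add_one hu.ne']; ring_nf
    simp only [Zq, ContinuousLinearMap.add_apply, ContinuousLinearMap.smul_apply,
      ContinuousLinearMap.sub_apply, ContinuousLinearMap.zero_apply,
      ContinuousLinearMap.coe_fst', ContinuousLinearMap.coe_snd', smul_eq_mul]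
    rw [← hw]
    ring
  · intro y hy
    simp [Hd]
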